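/- Let α, μ > 0 and δ > 0. Then the Laplace transform of the α-μ SNR density satisfies: γ̄^{αμ/2} · ∫₀^∞ exp(−δ·γ) · f_{γ̄}(γ) dγ tends to (α·μ^μ·Γ(αμ/2)) / (2·Γ(μ)·δ^{αμ/2}) as γ̄ → ∞. Consequently, the average symbol error probability of an ideal system with exponential-type SEP H(γ) = Σ_n θ_n·exp(−δ_n·γ) satisfies the high-SNR asymptote (α·Γ(αμ/2)·μ^μ/(2·Γ(μ))) · Σ_n θ_n·(δ_n·γ̄)^{−αμ/2}. -/

import Mathlib

open Real MeasureTheory Filter Topology Finset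

/-- The α-μ SNR probability density function. -/
noncomputable def alphaMuDensity (α μ γbar γ : ℝ) : ℝ :=
  if γ ≤ 0 then 0
  else (α * μ ^ μ) / (2 * Real.Gamma μ * γbar ^ (α * μ / 2)) * γ ^ (α * μ / 2 - 1) *
    Real.exp (-μ * (γ / γbar) ^ (α / 2))

section Aux

variable {α μ δ : ℝ}

lemma aux_hs (hα : 0 < α) (hμ : 0 < μ) : 0 < α * μ / 2 := by positivity

lemma aux_int (hα : 0 < α) (hμ : 0 < μ) (hδ : 0 < δ) :
    IntegrableOn (fun x : ℝ => x ^ (α * μ / 2 - 1) * Real.exp (-δ * x)) (Set.Ioi 0) := by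
  have := integrableOn_rpow_mul_exp_neg_mul_rpow (p := 1) (s := α * μ / 2 - 1) (b := δ)
    (by nlinarith [mul_pos hα hμ]) one_pos hδ
  simpa [Real.rpow_one] using this

lemma aux_meas (α μ γbar : ℝ) : Measurable (alphaMuDensity α μ γbar) := by
  unfold alphaMuDensity
  exact Measurable.ite measurableSet_Iic measurable_const (by fun_prop)

/-- Integrability of the integrand for γbar ≥ 1. -/
lemma aux_integrable (hα : 0 < α) (hμ : 0 < μ) (hδ : 0 < δ) {γbar : ℝ} (hb : 1 ≤ γbar) :
    IntegrableOn (fun γ => Real.exp (-δ * γ) * alphaMuDensity α μ γbar γ) (Set.Ioi 0) := by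
  have hb0 : 0 < γbar := lt_of_lt_of_le one_pos hb
  set s := α * μ / 2 with hsdef
  set K := α * μ ^ μ / (2 * Real.Gamma μ * γbar ^ s) with hKdef
  have hK : 0 < K := by
    have := Real.Gamma_pos_of_pos hμ
    have := Real.rpow_pos_of_pos hb0 s
    have := Real.rpow_pos_of_pos hμ μ
    positivity
  refine Integrable.mono' ((aux_int hα hμ hδ).const_mul K)
    ((measurable_exp.comp (measurable_id.const_mul _)).mul (aux_meas α μ γbar)).aestronglyMeasurable
    ?_
  filter_upwards [self_mem_ae_restrict (measurableSet_Ioi : MeasurableSet (Set.Ioi (0:ℝ)))]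
    with γ hγ
  have hγ0 : 0 < γ := hγ
  have h1 : alphaMuDensity α μ γbar γ =
      K * γ ^ (s - 1) * Real.exp (-μ * (γ / γbar) ^ (α / 2)) := by
    simp [alphaMuDensity, not_le.mpr hγ0, hsdef, hKdef]
  have hexp : Real.exp (-μ * (γ / γbar) ^ (α / 2)) ≤ 1 := by
    rw [Real.exp_le_one_iff]
    have : (0:ℝ) ≤ (γ / γbar) ^ (α / 2) := Real.rpow_nonneg (by positivity) _
    nlinarith
  rw [h1]
  have hγp : (0:ℝ) ≤ γ ^ (s - 1) := Real.rpow_nonneg hγ0.le _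
  have hnn : 0 ≤ Real.exp (-δ * γ) *
      (K * γ ^ (s - 1) * Real.exp (-μ * (γ / γbar) ^ (α / 2))) := by positivity
  rw [Real.norm_of_nonneg hnn]
  calc Real.exp (-δ * γ) * (K * γ ^ (s - 1) * Real.exp (-μ * (γ / γbar) ^ (α / 2)))
      = (Real.exp (-δ * γ) * (K * γ ^ (s - 1))) * Real.exp (-μ * (γ / γbar) ^ (α / 2)) := by ring
    _ ≤ (Real.exp (-δ * γ) * (K * γ ^ (s - 1))) * 1 :=
        mul_le_mul_of_nonneg_left hexp (by positivity)
    _ = K * (γ ^ (s - 1) * Real.exp (-δ * γ)) := by ring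

/-- Main Laplace-transform limit. -/
lemma aux_main (hα : 0 < α) (hμ : 0 < μ) (hδ : 0 < δ) :
    Tendsto (fun γbar : ℝ =>
        γbar ^ (α * μ / 2) *
          ∫ γ in Set.Ioi (0 : ℝ), Real.exp (-δ * γ) * alphaMuDensity α μ γbar γ) atTop
      (𝓝 ((α * μ ^ μ * Real.Gamma (α * μ / 2)) / (2 * Real.Gamma μ * δ ^ (α * μ / 2)))) := by
  set s := α * μ / 2 with hsdef
  have hs : 0 < s := aux_hs hα hμ
  have hΓμ : 0 < Real.Gamma μ := Real.Gamma_pos_of_pos hμ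
  set C := α * μ ^ μ / (2 * Real.Gamma μ) with hCdef
  have hlim : Tendsto (fun γbar : ℝ =>
      ∫ γ in Set.Ioi (0:ℝ), γ ^ (s - 1) * Real.exp (-δ * γ) *
        Real.exp (-μ * (γ / γbar) ^ (α / 2))) atTop
      (𝓝 (∫ γ in Set.Ioi (0:ℝ), γ ^ (s - 1) * Real.exp (-δ * γ))) := by
    refine tendsto_integral_filter_of_dominated_convergence
      (fun γ => γ ^ (s - 1) * Real.exp (-δ * γ)) ?_ ?_ (aux_int hα hμ hδ) ?_
    · filter_upwards with n
      exact Measurable.aestronglyMeasurable (by fun_prop)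
    · filter_upwards [eventually_ge_atTop (1:ℝ)] with n hn
      filter_upwards [self_mem_ae_restrict (measurableSet_Ioi : MeasurableSet (Set.Ioi (0:ℝ)))]
        with γ hγ
      have hγ0 : (0:ℝ) < γ := hγ
      have hn0 : (0:ℝ) < n := lt_of_lt_of_le one_pos hn
      have hrp : (0:ℝ) ≤ (γ / n) ^ (α / 2) := Real.rpow_nonneg (by positivity) _
      have hexp : Real.exp (-μ * (γ / n) ^ (α / 2)) ≤ 1 := by
        rw [Real.exp_le_one_iff]; nlinarith
      have hγp : (0:ℝ) ≤ γ ^ (s - 1) := Real.rpow_nonneg hγ0.le _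
      have hnn : 0 ≤ γ ^ (s - 1) * Real.exp (-δ * γ) * Real.exp (-μ * (γ / n) ^ (α / 2)) := by
        positivity
      rw [Real.norm_of_nonneg hnn]
      calc γ ^ (s - 1) * Real.exp (-δ * γ) * Real.exp (-μ * (γ / n) ^ (α / 2))
          ≤ γ ^ (s - 1) * Real.exp (-δ * γ) * 1 :=
            mul_le_mul_of_nonneg_left hexp (by positivity)
        _ = γ ^ (s - 1) * Real.exp (-δ * γ) := by ring
    · filter_upwards [self_mem_ae_restrict (measurableSet_Ioi : MeasurableSet (Set.Ioi (0:ℝ)))]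
        with γ hγ
      have hγ0 : (0:ℝ) < γ := hγ
      have h1 : Tendsto (fun n : ℝ => γ / n) atTop (𝓝 0) := by
        simpa [div_eq_mul_inv] using tendsto_inv_atTop_zero.const_mul γ
      have h2 : Tendsto (fun n : ℝ => (γ / n) ^ (α / 2)) atTop (𝓝 0) := by
        have hc : ContinuousAt (fun x : ℝ => x ^ (α / 2)) 0 :=
          Real.continuousAt_rpow_const 0 (α / 2) (Or.inr (by positivity))
        have := hc.tendsto.comp h1
        simpa [Real.zero_rpow (ne_of_gt (by positivity : (0:ℝ) < α / 2)), Function.comp_def] using this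
      have h2b : Tendsto (fun n : ℝ => -μ * (γ / n) ^ (α / 2)) atTop (𝓝 0) := by
        simpa using h2.const_mul (-μ)
      have h3 : Tendsto (fun n : ℝ => Real.exp (-μ * (γ / n) ^ (α / 2))) atTop (𝓝 1) := by
        simpa [Function.comp_def] using (Real.continuous_exp.tendsto 0).comp h2b
      have := (tendsto_const_nhds (x := γ ^ (s - 1) * Real.exp (-δ * γ))
        (f := atTop (α := ℝ))).mul h3
      simpa using this
  have hval : ∫ γ in Set.Ioi (0:ℝ), γ ^ (s - 1) * Real.exp (-δ * γ)
      = Real.Gamma s / δ ^ s := by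
    have h := Real.integral_rpow_mul_exp_neg_mul_Ioi hs hδ
    rw [show (fun γ : ℝ => γ ^ (s - 1) * Real.exp (-δ * γ))
        = fun t : ℝ => t ^ (s - 1) * Real.exp (-(δ * t)) by funext t; ring_nf]
    rw [h, Real.div_rpow zero_le_one hδ.le, Real.one_rpow]
    ring
  have key : Tendsto (fun γbar : ℝ =>
      C * ∫ γ in Set.Ioi (0:ℝ), γ ^ (s - 1) * Real.exp (-δ * γ) *
        Real.exp (-μ * (γ / γbar) ^ (α / 2))) atTop (𝓝 (C * (Real.Gamma s / δ ^ s))) := by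
    rw [← hval]
    exact hlim.const_mul C
  have heq : (fun γbar : ℝ =>
      C * ∫ γ in Set.Ioi (0:ℝ), γ ^ (s - 1) * Real.exp (-δ * γ) *
        Real.exp (-μ * (γ / γbar) ^ (α / 2))) =ᶠ[atTop]
      (fun γbar : ℝ => γbar ^ s *
        ∫ γ in Set.Ioi (0:ℝ), Real.exp (-δ * γ) * alphaMuDensity α μ γbar γ) := by
    filter_upwards [eventually_ge_atTop (1:ℝ)] with γbar hb
    have hb0 : 0 < γbar := lt_of_lt_of_le one_pos hb
    have hbs : 0 < γbar ^ s := Real.rpow_pos_of_pos hb0 s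
    have hcongr : ∫ γ in Set.Ioi (0:ℝ), Real.exp (-δ * γ) * alphaMuDensity α μ γbar γ
        = ∫ γ in Set.Ioi (0:ℝ), (C / γbar ^ s) *
            (γ ^ (s - 1) * Real.exp (-δ * γ) * Real.exp (-μ * (γ / γbar) ^ (α / 2))) := by
      apply setIntegral_congr_fun measurableSet_Ioi
      intro γ hγ
      have hγ0 : (0:ℝ) < γ := hγ
      simp only [alphaMuDensity, not_le.mpr hγ0, if_false, hCdef, hsdef]
      ring
    rw [hcongr, integral_const_mul, ← mul_assoc,
      show γbar ^ s * (C / γbar ^ s) = C by field_simp]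
  have hfin : C * (Real.Gamma s / δ ^ s)
      = (α * μ ^ μ * Real.Gamma s) / (2 * Real.Gamma μ * δ ^ s) := by
    rw [hCdef]
    have hδs : (0:ℝ) < δ ^ s := Real.rpow_pos_of_pos hδ s
    field_simp
  rw [← hfin]
  exact Tendsto.congr' heq key

end Aux

theorem stmt_17 (α μ δ : ℝ) (hα : 0 < α) (hμ : 0 < μ) (hδ : 0 < δ) :
    Tendsto (fun γbar : ℝ =>
        γbar ^ (α * μ / 2) *
          ∫ γ in Set.Ioi (0 : ℝ), Real.exp (-δ * γ) * alphaMuDensity α μ γbar γ) atTop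
      (𝓝 ((α * μ ^ μ * Real.Gamma (α * μ / 2)) / (2 * Real.Gamma μ * δ ^ (α * μ / 2)))) ∧
    ∀ (k : ℕ) (θ δs : Fin k → ℝ), (∀ n, 0 < δs n) →
      Tendsto (fun γbar : ℝ =>
          γbar ^ (α * μ / 2) *
            ∫ γ in Set.Ioi (0 : ℝ),
              (∑ n, θ n * Real.exp (-(δs n) * γ)) * alphaMuDensity α μ γbar γ) atTop
        (𝓝 ((α * Real.Gamma (α * μ / 2) * μ ^ μ / (2 * Real.Gamma μ)) *
          ∑ n, θ n * (δs n) ^ (-(α * μ / 2)))) := by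
  set s := α * μ / 2 with hsdef
  have hs : 0 < s := aux_hs hα hμ
  have hΓμ : 0 < Real.Gamma μ := Real.Gamma_pos_of_pos hμ
  refine ⟨aux_main hα hμ hδ, ?_⟩
  intro k θ δs hδs
  have hsum : Tendsto (fun γbar : ℝ => ∑ n, θ n *
      (γbar ^ s * ∫ γ in Set.Ioi (0:ℝ), Real.exp (-(δs n) * γ) * alphaMuDensity α μ γbar γ))
      atTop
      (𝓝 (∑ n, θ n * ((α * μ ^ μ * Real.Gamma s) / (2 * Real.Gamma μ * (δs n) ^ s)))) :=
    tendsto_finset_sum _ (fun n _ => (aux_main hα hμ (hδs n)).const_mul (θ n))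
  have heq : (fun γbar : ℝ => ∑ n, θ n *
      (γbar ^ s * ∫ γ in Set.Ioi (0:ℝ), Real.exp (-(δs n) * γ) * alphaMuDensity α μ γbar γ))
      =ᶠ[atTop]
      (fun γbar : ℝ => γbar ^ s * ∫ γ in Set.Ioi (0:ℝ),
        (∑ n, θ n * Real.exp (-(δs n) * γ)) * alphaMuDensity α μ γbar γ) := by
    filter_upwards [eventually_ge_atTop (1:ℝ)] with γbar hb
    have hint : ∫ γ in Set.Ioi (0:ℝ),
        (∑ n, θ n * Real.exp (-(δs n) * γ)) * alphaMuDensity α μ γbar γ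
        = ∑ n, θ n * ∫ γ in Set.Ioi (0:ℝ),
            Real.exp (-(δs n) * γ) * alphaMuDensity α μ γbar γ := by
      have h1 : ∀ γ : ℝ, (∑ n, θ n * Real.exp (-(δs n) * γ)) * alphaMuDensity α μ γbar γ
          = ∑ n, θ n * (Real.exp (-(δs n) * γ) * alphaMuDensity α μ γbar γ) := by
        intro γ; rw [Finset.sum_mul]; congr 1; funext n; ring
      simp_rw [h1]
      rw [integral_finset_sum]
      · simp_rw [integral_const_mul]
      · intro n _
        exact (aux_integrable hα hμ (hδs n) hb).const_mul (θ n)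
    rw [hint, Finset.mul_sum]
    congr 1; funext n; ring
  have h := Tendsto.congr' heq hsum
  convert h using 2
  rw [Finset.mul_sum]
  congr 1; funext n
  have hd : (0:ℝ) < δs n := hδs n
  have hds : (0:ℝ) < (δs n) ^ s := Real.rpow_pos_of_pos hd s
  rw [Real.rpow_neg hd.le]
  field_simp
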